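/- If the two-column root configuration ĈC' satisfies the Non-overlapping Condition, then for any HHL filling CC' = σ.ĈC' with σ ∈ A(β), and any entry aᵢ of the left column, the transposition (b_{j_i} < aᵢ) (where b_{j_i} is the largest pivot entry strictly less than aᵢ) is the only possible legal transposition involving aᵢ that can be applied to CC'. -/
import Mathlib


/-- Two-column HHL filling condition. -/
def HHL2 (c c' : ℕ) (C : Fin c → ℕ) (C' : Fin c' → ℕ) : Prop :=
  Function.Injective C ∧ Function.Injective C' ∧
  (∀ (i : Fin c) (k : Fin c'), (k : ℕ) < (i : ℕ) → C i ≠ C' k) ∧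
  (∀ (i : Fin c) (h : (i : ℕ) < c'), C i ≤ C' ⟨i, h⟩)

/-- Row `i` is a pivot row of the two-column configuration `CC'`:
either the left entry is strictly smaller than the right entry, or the row
lies below the bottom of the right column. -/
def PivotRow (c c' : ℕ) (C : Fin c → ℕ) (C' : Fin c' → ℕ) (i : Fin c) : Prop :=
  c' ≤ (i : ℕ) ∨ ∃ h : (i : ℕ) < c', C i < C' ⟨i, h⟩

/-- The set of pivot entries of the left column. -/
def pivotEntries (c c' : ℕ) (C : Fin c → ℕ) (C' : Fin c' → ℕ) : Set ℕ :=
  {x | ∃ i : Fin c, PivotRow c c' C C' i ∧ C i = x}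

/-- Failure of the Non-overlapping Condition: two distinct pivot rows whose
pivot intervals `[b_j, d_j]` (with `d_j = ∞` when the right entry is absent)
intersect. -/
def Overlap (c c' : ℕ) (C : Fin c → ℕ) (C' : Fin c' → ℕ) : Prop :=
  ∃ i j : Fin c, i ≠ j ∧ PivotRow c c' C C' i ∧ PivotRow c c' C C' j ∧
    ∃ z : ℕ, C i ≤ z ∧ (∀ h : (i : ℕ) < c', z ≤ C' ⟨i, h⟩) ∧
      C j ≤ z ∧ (∀ h : (j : ℕ) < c', z ≤ C' ⟨j, h⟩)

/-- Proposition 4.3: if the root configuration `Croot C'` satisfies the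
Non-overlapping Condition, then for any HHL rearrangement `CC'` of it, the only
possible legal transposition involving an entry `aᵢ = C i₂` is the one with the
largest pivot entry strictly less than `aᵢ`: any legal swap of `aᵢ` with a
pivot entry `C i₁ < aᵢ` forces `C i₁` to dominate every pivot entry below
`aᵢ`. -/
theorem unique_legal_transposition (c c' : ℕ) (hcc : c = c' ∨ c = c' + 1)
    (C' : Fin c' → ℕ) (Croot : Fin c → ℕ)
    (hroot : HHL2 c c' Croot C')
    (hmatch : ∀ (i : Fin c) (j : Fin c'), Croot i = C' j → (i : ℕ) = (j : ℕ))
    (horder : ∀ (i i' : Fin c) (hi : (i : ℕ) < c') (hi' : (i' : ℕ) < c'),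
      (∀ j : Fin c', Croot i ≠ C' j) → (∀ j : Fin c', Croot i' ≠ C' j) →
      (Croot i < Croot i' ↔ C' ⟨(i : ℕ), hi⟩ < C' ⟨(i' : ℕ), hi'⟩))
    (hbottom : ∀ i : Fin c, (i : ℕ) = c' →
      ∀ i' : Fin c, (∀ j : Fin c', Croot i' ≠ C' j) → Croot i' ≤ Croot i)
    (hno : ¬ Overlap c c' Croot C')
    (C : Fin c → ℕ) (hCarr : Set.range C = Set.range Croot)
    (hC : HHL2 c c' C C') :
    ∀ i₁ i₂ : Fin c, C i₁ ∈ pivotEntries c c' Croot C' → C i₁ < C i₂ →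
      HHL2 c c' (C ∘ Equiv.swap i₁ i₂) C' →
      ∀ b' ∈ pivotEntries c c' Croot C', b' < C i₂ → b' ≤ C i₁ := by

  classical
  intro i₁ i₂ hpiv hlt hswap b' hb'piv hb'lt
  by_contra hcon
  push_neg at hcon
  obtain ⟨i, hpi, hCi⟩ := hpiv
  obtain ⟨j, hpj, hCj⟩ := hb'piv
  have hij : i ≠ j := by
    intro h
    have : C i₁ = b' := by rw [← hCi, h, hCj]
    exact absurd this (ne_of_lt hcon)
  have hjle : ∀ h : (j : ℕ) < c', b' ≤ C' ⟨(j : ℕ), h⟩ := by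
    intro h
    rcases hpj with h' | ⟨h'', hlt''⟩
    · omega
    · rw [← hCj]; exact hlt''.le
  by_cases hic : (i : ℕ) < c'
  · set t := C' ⟨(i : ℕ), hic⟩ with ht
    have hbt : Croot i < t := by
      rcases hpi with h' | ⟨h'', hlt''⟩
      · omega
      · exact hlt''
    have htb' : t < b' := by
      by_contra hle
      push_neg at hle
      exact hno ⟨i, j, hij, hpi, hpj, b', by rw [hCi]; exact hcon.le,
        fun h => hle, le_of_eq hCj, hjle⟩
    set Big : Finset (Fin c) :=
      Finset.univ.filter (fun k => ∀ h : (k : ℕ) < c', t < C' ⟨(k : ℕ), h⟩) with hBig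
    have hrootBig : Finset.univ.filter (fun k => t < Croot k) = Big := by
      ext k
      simp only [hBig, Finset.mem_filter, Finset.mem_univ, true_and]
      constructor
      · intro hk h
        exact lt_of_lt_of_le hk (hroot.2.2.2 k h)
      · intro hk
        by_contra hle
        push_neg at hle
        by_cases hkc : (k : ℕ) < c'
        · have hik : i ≠ k := by
            intro h
            subst h
            exact lt_irrefl t (hk hic)
          exact hno ⟨i, k, hik, hpi, Or.inr ⟨hkc, lt_of_le_of_lt hle (hk hkc)⟩,
            t, hbt.le, fun h => le_refl _, hle, fun h => (hk h).le⟩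
        · have hik : i ≠ k := by
            intro h; subst h; exact hkc hic
          exact hno ⟨i, k, hik, hpi, Or.inl (le_of_not_gt hkc), t, hbt.le,
            fun h => le_refl _, hle, fun h => absurd h hkc⟩
    have himg : (Finset.univ.image C) = Finset.univ.image Croot := by
      apply Finset.coe_injective
      simpa using hCarr
    have key : ∀ f : Fin c → ℕ, ((Finset.univ.filter fun k => t < f k).image f)
        = (Finset.univ.image f).filter (fun x => t < x) := by
      intro f
      ext x
      simp only [Finset.mem_image, Finset.mem_filter, Finset.mem_univ, true_and]
      constructor
      · rintro ⟨k, hk, rfl⟩; exact ⟨⟨k, rfl⟩, hk⟩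
      · rintro ⟨⟨k, rfl⟩, hx⟩; exact ⟨k, hx, rfl⟩
    have hcardEq : (Finset.univ.filter fun k => t < C k).card
        = (Finset.univ.filter fun k => t < Croot k).card := by
      have h1 : ((Finset.univ.filter fun k => t < C k).image C).card
          = ((Finset.univ.filter fun k => t < Croot k).image Croot).card := by
        rw [key C, key Croot, himg]
      rwa [Finset.card_image_of_injective _ hC.1,
        Finset.card_image_of_injective _ hroot.1] at h1
    have hsub : (Finset.univ.filter fun k => t < C k) ⊆ Big := by
      intro k hk
      simp only [Finset.mem_filter, Finset.mem_univ, true_and] at hk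
      simp only [hBig, Finset.mem_filter, Finset.mem_univ, true_and]
      intro h
      exact lt_of_lt_of_le hk (hC.2.2.2 k h)
    have hi₁Big : i₁ ∈ Big := by
      simp only [hBig, Finset.mem_filter, Finset.mem_univ, true_and]
      intro h
      have h2 : C i₂ ≤ C' ⟨(i₁ : ℕ), h⟩ := by
        have h3 := hswap.2.2.2 i₁ h
        simpa [Equiv.swap_apply_left] using h3
      exact lt_of_lt_of_le (lt_trans htb' hb'lt) h2
    have hi₁not : i₁ ∉ (Finset.univ.filter fun k => t < C k) := by
      simp only [Finset.mem_filter, Finset.mem_univ, true_and]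
      rw [← hCi]
      exact not_lt.mpr hbt.le
    have hss : (Finset.univ.filter fun k => t < C k) ⊂ Big :=
      (Finset.ssubset_iff_of_subset hsub).mpr ⟨i₁, hi₁Big, hi₁not⟩
    rw [hrootBig] at hcardEq
    exact absurd hcardEq (ne_of_lt (Finset.card_lt_card hss))
  · exact hno ⟨i, j, hij, hpi, hpj, b', by rw [hCi]; exact hcon.le,
      fun h => absurd h hic, le_of_eq hCj, hjle⟩
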